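/- Let signs b_{3j+1} ∈ {-1,1} and R_N(t) = ∑_{j=0}^N b_{3j+1} t^{3j}. Then |R_N(φ^{-1})| ≥ 1 - φ^{-3}/(1-φ^{-3}), and hence the derivative of P_N(t) = (1-t-t²)R_N(t) at t = φ^{-1} satisfies |P_N'(φ^{-1})| ≥ (1 + 2φ^{-1})(1 - φ^{-3}/(1-φ^{-3})) ≥ 1.545. -/

import Mathlib

/-- Derivative lower bound at `φ⁻¹`: with `R_N(t) = ∑_{j=0}^N b_{3j+1} t^{3j}`
(signs `±1`) and `P_N(t) = (1-t-t²)R_N(t)`, we have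
`|R_N(φ⁻¹)| ≥ 1 - φ⁻³/(1-φ⁻³)`, hence
`|P_N'(φ⁻¹)| ≥ (1+2φ⁻¹)(1 - φ⁻³/(1-φ⁻³)) ≥ 1.545`. -/
theorem gre_derivative_lower_bound (s : ℕ → ℝ)
    (hs : ∀ j, s j = -1 ∨ s j = 1) (N : ℕ)
    (φ : ℝ) (hφ : φ = (1 + Real.sqrt 5) / 2)
    (R P : ℝ → ℝ)
    (hR : ∀ t, R t = ∑ j ∈ Finset.range (N+1), s j * t^(3*j))
    (hP : ∀ t, P t = (1 - t - t^2) * R t) :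
    1 - φ⁻¹^3 / (1 - φ⁻¹^3) ≤ |R φ⁻¹| ∧
    (1 + 2*φ⁻¹) * (1 - φ⁻¹^3 / (1 - φ⁻¹^3)) ≤ |deriv P φ⁻¹| ∧
    (1.545 : ℝ) ≤ (1 + 2*φ⁻¹) * (1 - φ⁻¹^3 / (1 - φ⁻¹^3)) := by
  have hs5sq : Real.sqrt 5 ^ 2 = 5 := Real.sq_sqrt (by norm_num)
  set s5 := Real.sqrt 5 with hs5def
  have hs5nn : (0:ℝ) ≤ s5 := Real.sqrt_nonneg 5
  have hs5lb : (2.23606:ℝ) < s5 := by nlinarith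
  have hs5ub : s5 < (2.23607:ℝ) := by nlinarith
  have hφpos : 0 < φ := by rw [hφ]; linarith
  have hmul : φ * ((s5-1)/2) = 1 := by rw [hφ]; linear_combination hs5sq / 4
  have hxval : φ⁻¹ = (s5-1)/2 := (eq_inv_of_mul_eq_one_right hmul).symm
  rw [hxval]
  set x : ℝ := (s5-1)/2 with hxdef
  have hxpos : 0 < x := by rw [hxdef]; linarith
  have hx1 : x^2 + x = 1 := by rw [hxdef]; linear_combination hs5sq / 4
  have hx3 : x^3 = s5 - 2 := by rw [hxdef]; linear_combination ((s5-3)/8) * hs5sq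
  have h13 : 1 - x^3 = 3 - s5 := by rw [hx3]; ring
  have hb : (0:ℝ) < 1 - x^3 := by rw [h13]; linarith
  -- geometric sum bound
  have hgeom : ∑ j ∈ Finset.range N, (x^3)^j ≤ 1/(1-x^3) := by
    rw [le_div_iff₀ hb]
    nlinarith [geom_sum_mul (x^3) N, pow_nonneg (pow_nonneg hxpos.le 3) N]
  -- tail bound
  have htail : |∑ j ∈ Finset.range N, s (j+1) * x^(3*(j+1))| ≤ x^3/(1-x^3) := by
    calc |∑ j ∈ Finset.range N, s (j+1) * x^(3*(j+1))|
        ≤ ∑ j ∈ Finset.range N, |s (j+1) * x^(3*(j+1))| :=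
          Finset.abs_sum_le_sum_abs _ _
      _ = ∑ j ∈ Finset.range N, x^3 * (x^3)^j := by
          refine Finset.sum_congr rfl fun j _ => ?_
          have hxpow : ∀ k : ℕ, |x^k| = x^k :=
            fun k => abs_of_nonneg (pow_nonneg hxpos.le k)
          rcases hs (j+1) with h | h <;>
            simp [h, abs_mul, hxpow, show 3*(j+1) = 3+3*j from by ring, pow_add, pow_mul]
      _ = x^3 * ∑ j ∈ Finset.range N, (x^3)^j := by rw [Finset.mul_sum]
      _ ≤ x^3 * (1/(1-x^3)) := by
          exact mul_le_mul_of_nonneg_left hgeom (by positivity)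
      _ = x^3/(1-x^3) := by ring
  -- part 1
  have hRx := hR x
  rw [Finset.sum_range_succ'] at hRx
  have h0 : |s 0 * x ^ (3*0)| = 1 := by
    rcases hs 0 with h | h <;> simp [h]
  have key : 1 - x^3/(1-x^3) ≤ |R x| := by
    have h2 : |s 0 * x ^ (3*0)| ≤
        |(∑ j ∈ Finset.range N, s (j+1) * x^(3*(j+1))) + s 0 * x ^ (3*0)|
          + |∑ j ∈ Finset.range N, s (j+1) * x^(3*(j+1))| := by
      calc |s 0 * x ^ (3*0)|
          = |((∑ j ∈ Finset.range N, s (j+1) * x^(3*(j+1))) + s 0 * x ^ (3*0))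
              + (-(∑ j ∈ Finset.range N, s (j+1) * x^(3*(j+1))))| := by
            congr 1; ring
        _ ≤ _ := by
            rw [← abs_neg (∑ j ∈ Finset.range N, s (j+1) * x^(3*(j+1)))]
            exact abs_add_le _ _
    rw [hRx]
    linarith [h2, h0, htail]
  refine ⟨key, ?_, ?_⟩
  · -- derivative
    have hReq : R = fun t => ∑ j ∈ Finset.range (N+1), s j * t^(3*j) := funext hR
    have hRderiv : HasDerivAt R
        (∑ j ∈ Finset.range (N+1), s j * ((3*j : ℕ) * x^(3*j - 1))) x := by
      rw [hReq]
      exact HasDerivAt.fun_sum fun j _ => (hasDerivAt_pow (3*j) x).const_mul (s j)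
    have hpoly : HasDerivAt (fun t : ℝ => 1 - t - t^2) (-1 - 2*x) x := by
      have h := ((hasDerivAt_const x (1:ℝ)).sub (hasDerivAt_id x)).sub
        (hasDerivAt_pow 2 x)
      have he : (-1 - 2*x : ℝ) = 0 - 1 - ↑2 * x^(2-1) := by push_cast; ring
      rw [he]
      exact h
    have hPeq : P = fun t => (1 - t - t^2) * R t := funext hP
    have hPd : HasDerivAt P
        ((-1 - 2*x) * R x + (1 - x - x^2) *
          (∑ j ∈ Finset.range (N+1), s j * ((3*j : ℕ) * x^(3*j - 1)))) x := by
      rw [hPeq]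
      exact hpoly.mul hRderiv
    have hx0 : 1 - x - x^2 = 0 := by linarith
    have hd : deriv P x = (-1 - 2*x) * R x := by
      rw [hPd.deriv, hx0]; ring
    rw [hd, abs_mul, abs_of_nonpos (by linarith : (-1 - 2*x : ℝ) ≤ 0)]
    have : -(-1 - 2*x) = 1 + 2*x := by ring
    rw [this]
    exact mul_le_mul_of_nonneg_left key (by linarith)
  · -- numeric bound
    have hA : x^3/(1-x^3) ≤ 0.30903 := by
      rw [hx3, div_le_iff₀ (by linarith)]
      nlinarith
    have hB : (0.69097:ℝ) ≤ 1 - x^3/(1-x^3) := by linarith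
    have h2x : (2.23606:ℝ) ≤ 1 + 2*x := by rw [hxdef]; linarith
    calc (1.545:ℝ) ≤ 2.23606 * 0.69097 := by norm_num
      _ ≤ (1 + 2*x) * (1 - x^3/(1-x^3)) :=
          mul_le_mul h2x hB (by norm_num) (by linarith)
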